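/- Let $n\in\mathbb{N}$ and $1\le p\le 2\le q\le r\le\infty$. For every real array $A=(A_{i,j,k})_{i,j,k=1}^n$, $\sup_{\|x\|_p=\|y\|_q=\|z\|_r=1}\big|\sum_{i,j,k=1}^n A_{i,j,k}x_iy_jz_k\big| \ge \tfrac{1}{\sqrt2}\, n^{-\frac1q-\frac1r-\frac32}\sum_{i,j,k=1}^n |A_{i,j,k}|$. -/

import Mathlib

open Finset
open scoped ENNReal NNReal

/-- The `ℓ_p` norm on `ℝ^n` for an extended real exponent `p`
(with `pnorm ∞ x = max_i |x i|`). -/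
noncomputable def pnorm (p : ℝ≥0∞) {n : ℕ} (x : Fin n → ℝ) : ℝ :=
  if p = ∞ then ⨆ i, |x i| else (∑ i, |x i| ^ p.toReal) ^ (1 / p.toReal)

/-- sign associated to a boolean -/
noncomputable def bsign (b : Bool) : ℝ := if b then 1 else -1

lemma abs_bsign (b : Bool) : |bsign b| = 1 := by cases b <;> simp [bsign]

/-- integer ±1 sum -/
def szum {N : ℕ} (ε : Fin N → Bool) : ℤ := ∑ j, (if ε j then 1 else -1)

def TT (N : ℕ) : ℤ := ∑ ε : Fin N → Bool, |szum ε|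

def ZZ (N : ℕ) : ℕ := (Finset.univ.filter (fun ε : Fin N → Bool => szum ε = 0)).card

lemma int_abs_succ (X : ℤ) : |X + 1| + |X + -1| = 2 * |X| + (if X = 0 then 2 else 0) := by
  rcases lt_trichotomy X 0 with h | rfl | h
  · rw [abs_of_nonpos (by omega), abs_of_nonpos (by omega), abs_of_neg h, if_neg (by omega)]
    ring
  · simp
  · rw [abs_of_pos (by omega), abs_of_nonneg (by omega), abs_of_pos h, if_neg (by omega)]
    ring

lemma TT_succ (N : ℕ) : TT (N + 1) = 2 * TT N + 2 * ZZ N := by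
  have h1 : TT (N + 1) =
      ∑ p : Bool × (Fin N → Bool), |(if p.1 then (1:ℤ) else -1) + szum p.2| := by
    refine Fintype.sum_equiv (Fin.consEquiv (fun _ => Bool)).symm _ _ fun ε => ?_
    simp only [Fin.consEquiv, Equiv.coe_fn_symm_mk]
    congr 1
    unfold szum
    rw [Fin.sum_univ_succ]
    simp [Fin.succAbove, Fin.tail]
    rfl
  rw [h1, Fintype.sum_prod_type, Fintype.sum_bool]
  simp only [if_true, Bool.false_eq_true, if_false, ← Finset.sum_add_distrib]
  have h2 : ∀ ε : Fin N → Bool,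
      |(1:ℤ) + szum ε| + |(-1 : ℤ) + szum ε| = 2 * |szum ε| + (if szum ε = 0 then 2 else 0) := by
    intro ε
    have := int_abs_succ (szum ε)
    rw [add_comm ((1:ℤ)) (szum ε), add_comm ((-1:ℤ)) (szum ε)]
    omega
  rw [Finset.sum_congr rfl fun ε _ => h2 ε, Finset.sum_add_distrib, ← Finset.mul_sum]
  have h3 : (∑ ε : Fin N → Bool, if szum ε = 0 then (2:ℤ) else 0) = 2 * ZZ N := by
    rw [← Finset.sum_filter]
    simp [ZZ, Finset.sum_const, mul_comm]
  rw [h3]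
  rfl

lemma ZZ_even (m : ℕ) : Nat.centralBinom m ≤ ZZ (2 * m) := by
  classical
  have hcard : (Finset.powersetCard m (Finset.univ : Finset (Fin (2 * m)))).card
      = Nat.centralBinom m := by
    rw [Finset.card_powersetCard, Finset.card_univ, Fintype.card_fin,
      Nat.centralBinom_eq_two_mul_choose]
  rw [← hcard, ZZ]
  apply Finset.card_le_card_of_injOn (fun s => fun j => decide (j ∈ s))
  · intro s hs
    rw [Finset.mem_coe, Finset.mem_powersetCard] at hs
    simp only [Finset.coe_filter, Set.mem_setOf_eq, Finset.mem_filter, Finset.mem_univ, true_and]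
    unfold szum
    have h1 : (∑ j : Fin (2 * m), if decide (j ∈ s) = true then (1:ℤ) else -1)
        = ∑ j : Fin (2 * m), ((if j ∈ s then (2:ℤ) else 0) - 1) := by
      refine Finset.sum_congr rfl fun j _ => ?_
      by_cases h : j ∈ s <;> simp [h]
    rw [h1, Finset.sum_sub_distrib, Finset.sum_ite_mem, Finset.univ_inter, Finset.sum_const,
      Finset.sum_const, hs.2]
    simp only [Finset.card_univ, Fintype.card_fin, smul_eq_mul, mul_one, Nat.cast_mul,
      Nat.cast_ofNat]
    ring
  · intro s₁ h₁ s₂ h₂ h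
    ext j
    have := congrFun h j
    simpa using this

lemma cb_bound : ∀ m : ℕ, 1 ≤ m → (4:ℝ) ^ m ≤ 2 * Real.sqrt m * Nat.centralBinom m := by
  intro m
  induction m with
  | zero => omega
  | succ k ih =>
    intro _
    rcases Nat.eq_zero_or_pos k with rfl | hk
    · norm_num [Nat.centralBinom]
    have hIH := ih hk
    have hk1 : (1:ℝ) ≤ (k:ℝ) := by exact_mod_cast hk
    have hsq : Real.sqrt k * Real.sqrt k = (k:ℝ) :=
      Real.mul_self_sqrt (by positivity)
    have hsq1 : Real.sqrt (k+1) * Real.sqrt (k+1) = ((k:ℝ)+1) := by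
      rw [Real.mul_self_sqrt (by positivity)]
    have hrec : ((k:ℝ) + 1) * Nat.centralBinom (k+1) = 2 * (2 * k + 1) * Nat.centralBinom k := by
      have := Nat.succ_mul_centralBinom_succ k
      exact_mod_cast congrArg (Nat.cast : ℕ → ℝ) this
    -- key: 2 * sqrt k * sqrt (k+1) ≤ 2k+1
    have hkey : 2 * (Real.sqrt k * Real.sqrt (k+1)) ≤ 2 * (k:ℝ) + 1 := by
      nlinarith [sq_nonneg (Real.sqrt k - Real.sqrt (k+1)), Real.sqrt_nonneg (k:ℝ),
        Real.sqrt_nonneg ((k:ℝ)+1), sq_nonneg (Real.sqrt k * Real.sqrt (k+1) - (k:ℝ))]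
    have hcbpos : (0:ℝ) < Nat.centralBinom k := by
      exact_mod_cast Nat.centralBinom_pos k
    have hs1 : (0:ℝ) < Real.sqrt k := Real.sqrt_pos.2 (by positivity)
    have hs2 : (0:ℝ) < Real.sqrt (k+1) := Real.sqrt_pos.2 (by positivity)
    -- multiply target by (k+1) > 0
    rw [← mul_le_mul_iff_of_pos_right (show (0:ℝ) < (k:ℝ)+1 by positivity)]
    have hrw : 2 * Real.sqrt (k+1) * (Nat.centralBinom (k+1) : ℝ) * ((k:ℝ)+1)
        = 2 * Real.sqrt (k+1) * (2 * (2*k+1) * Nat.centralBinom k) := by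
      rw [mul_assoc (2 * Real.sqrt (k+1)), mul_comm (Nat.centralBinom (k+1) : ℝ), ← mul_assoc,
        mul_assoc (2 * Real.sqrt (k+1)), hrec]
      try ring
    push_cast
    push_cast at hrw
    rw [hrw]
    have h4 : (4:ℝ)^(k+1) = 4 * 4^k := by ring
    rw [h4]
    set cb : ℝ := (Nat.centralBinom k : ℝ) with hcb
    have step1 : 4*4^k*((k:ℝ)+1) ≤ 4*(2*Real.sqrt k*cb)*((k:ℝ)+1) := by nlinarith [hIH]
    have hpos : (0:ℝ) ≤ 4*cb*Real.sqrt ((k:ℝ)+1) := by positivity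
    have hm := mul_le_mul_of_nonneg_left hkey hpos
    have he : 4*cb*Real.sqrt ((k:ℝ)+1) * (2*(Real.sqrt (k:ℝ) * Real.sqrt ((k:ℝ)+1)))
        = 4*(2*Real.sqrt (k:ℝ)*cb)*((k:ℝ)+1) := by
      linear_combination 8 * Real.sqrt (k:ℝ) * cb * hsq1
    calc 4*4^k*((k:ℝ)+1) ≤ 4*(2*Real.sqrt (k:ℝ)*cb)*((k:ℝ)+1) := step1
      _ = 4*cb*Real.sqrt ((k:ℝ)+1) * (2*(Real.sqrt (k:ℝ) * Real.sqrt ((k:ℝ)+1))) := he.symm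
      _ ≤ 4*cb*Real.sqrt ((k:ℝ)+1) * (2*(k:ℝ)+1) := hm
      _ = 2 * Real.sqrt ((k:ℝ)+1) * (2*(2*(k:ℝ)+1)*cb) := by ring

lemma TT_nonneg (N : ℕ) : 0 ≤ TT N := Finset.sum_nonneg fun _ _ => abs_nonneg _

lemma TT_bound : ∀ N : ℕ, (2:ℝ) ^ N * Real.sqrt (((N + 1) / 2 : ℕ)) ≤ (TT N : ℝ) := by
  intro N
  induction N with
  | zero => simp [TT, szum]
  | succ N ih =>
    have hrec : ((TT (N+1) : ℤ) : ℝ) = 2 * (TT N : ℝ) + 2 * (ZZ N : ℝ) := by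
      rw [TT_succ]; push_cast; ring
    rcases Nat.eq_zero_or_pos N with rfl | hN
    · have hz : ZZ 0 = 1 := by decide
      have ht : TT 0 = 0 := by decide
      rw [hrec, hz, ht]
      norm_num
    rcases Nat.even_or_odd N with ⟨m, hm⟩ | ⟨m, hm⟩
    · -- N = 2m, m ≥ 1
      have hm' : N = 2 * m := by omega
      have hm1 : 1 ≤ m := by omega
      have hidx1 : (N + 1) / 2 = m := by omega
      have hidx2 : (N + 1 + 1) / 2 = m + 1 := by omega
      have hZ : (Nat.centralBinom m : ℝ) ≤ (ZZ N : ℝ) := by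
        exact_mod_cast hm' ▸ ZZ_even m
      have hcb := cb_bound m hm1
      have hs : (0:ℝ) < Real.sqrt m := Real.sqrt_pos.2 (by positivity)
      have hsq : Real.sqrt m * Real.sqrt m = (m:ℝ) := Real.mul_self_sqrt (by positivity)
      -- 4^m = 2^N
      have h4 : (4:ℝ) ^ m = 2 ^ N := by
        rw [hm', pow_mul]; norm_num
      -- ZZ N ≥ 2^N / (2 sqrt m)
      have hZ2 : (2:ℝ) ^ N ≤ 2 * Real.sqrt m * (ZZ N : ℝ) := by
        calc (2:ℝ)^N = 4^m := h4.symm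
          _ ≤ 2 * Real.sqrt m * Nat.centralBinom m := hcb
          _ ≤ 2 * Real.sqrt m * (ZZ N : ℝ) := by
              apply mul_le_mul_of_nonneg_left hZ (by positivity)
      rw [hrec, hidx2]
      rw [hidx1] at ih
      -- target : 2^(N+1) * sqrt (m+1) ≤ 2 * TT N + 2 * ZZ N
      -- sqrt(m+1) ≤ sqrt m + 1/(2 sqrt m)
      have hkey : Real.sqrt ((m:ℝ) + 1) ≤ Real.sqrt m + 1 / (2 * Real.sqrt m) := by
        have h1 : (m:ℝ) + 1 ≤ (Real.sqrt m + 1 / (2 * Real.sqrt m))^2 := by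
          have : (Real.sqrt m + 1 / (2 * Real.sqrt m))^2
              = (m:ℝ) + 1 + (1 / (2 * Real.sqrt m))^2 := by
            field_simp
            nlinarith [hsq]
          nlinarith [sq_nonneg (1 / (2 * Real.sqrt m))]
        calc Real.sqrt ((m:ℝ)+1) ≤ Real.sqrt ((Real.sqrt m + 1 / (2 * Real.sqrt m))^2) :=
              Real.sqrt_le_sqrt h1
          _ = Real.sqrt m + 1 / (2 * Real.sqrt m) := Real.sqrt_sq (by positivity)
      have hcast : ((m + 1 : ℕ) : ℝ) = (m:ℝ) + 1 := by push_cast; ring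
      rw [hcast]
      have hZ3 : (2:ℝ)^N * (1 / (2 * Real.sqrt m)) ≤ (ZZ N : ℝ) := by
        rw [mul_one_div, div_le_iff₀ (by positivity)]
        nlinarith [hZ2]
      have hfin : (2:ℝ)^(N+1) * Real.sqrt ((m:ℝ)+1)
          ≤ 2^(N+1) * (Real.sqrt m + 1 / (2 * Real.sqrt m)) := by
        apply mul_le_mul_of_nonneg_left hkey (by positivity)
      have : (2:ℝ)^(N+1) * (Real.sqrt m + 1 / (2 * Real.sqrt m))
          = 2 * (2^N * Real.sqrt m) + 2 * (2^N * (1 / (2 * Real.sqrt m))) := by ring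
      rw [this] at hfin
      have hcast2 : ((m : ℕ) : ℝ) = (m:ℝ) := rfl
      linarith [ih, hZ3]
    · -- N odd: indices agree
      have hidx : (N + 1 + 1) / 2 = (N + 1) / 2 := by omega
      have hZ0 : (0:ℝ) ≤ (ZZ N : ℝ) := by positivity
      rw [hrec, hidx]
      have : (2:ℝ)^(N+1) * Real.sqrt (((N+1)/2 : ℕ)) = 2 * (2^N * Real.sqrt (((N+1)/2 : ℕ))) := by
        ring
      rw [this]
      linarith [ih]

noncomputable def ff {N : ℕ} (a : Fin N → ℝ) : ℝ :=
  ∑ ε : Fin N → Bool, |∑ j, a j * bsign (ε j)|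

lemma bsign_not (b : Bool) : bsign (!b) = -bsign b := by cases b <;> simp [bsign]

lemma ff_abs {N : ℕ} (a : Fin N → ℝ) : ff (fun j => |a j|) = ff a := by
  unfold ff
  have hinv : Function.Involutive
      (fun ε : Fin N → Bool => fun j => xor (decide (a j < 0)) (ε j)) := by
    intro ε; funext j; simp
  refine Fintype.sum_bijective _ hinv.bijective _ _ fun ε => ?_
  congr 1
  refine Finset.sum_congr rfl fun j _ => ?_
  simp only []
  by_cases h : a j < 0
  · have hd : decide (a j < 0) = true := by simpa using h
    show |a j| * bsign (ε j) = a j * bsign (decide (a j < 0) ^^ ε j)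
    rw [abs_of_neg h, hd, Bool.true_xor, bsign_not]
    ring
  · have hd : decide (a j < 0) = false := by simpa using h
    show |a j| * bsign (ε j) = a j * bsign (decide (a j < 0) ^^ ε j)
    rw [abs_of_nonneg (not_lt.1 h), hd, Bool.false_xor]

lemma ff_shift {N : ℕ} [NeZero N] (b : Fin N → ℝ) (c : Fin N) :
    ff (fun j => b (c + j)) = ff b := by
  unfold ff
  have h1 : ∀ ε : Fin N → Bool, ∑ j, b (c + j) * bsign (ε j)
      = ∑ j, b j * bsign (ε ((Equiv.addLeft c).symm j)) := by
    intro ε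
    rw [← Equiv.sum_comp (Equiv.addLeft c)
      (fun j => b j * bsign (ε ((Equiv.addLeft c).symm j)))]
    refine Finset.sum_congr rfl fun j _ => ?_
    simp
  calc ∑ ε : Fin N → Bool, |∑ j, b (c + j) * bsign (ε j)|
      = ∑ ε : Fin N → Bool, |∑ j, b j * bsign ((ε ∘ (Equiv.addLeft c).symm) j)| :=
        Finset.sum_congr rfl fun ε _ => by rw [h1 ε]; rfl
    _ = ∑ ε : Fin N → Bool, |∑ j, b j * bsign (ε j)| := by
        exact Fintype.sum_equiv (Equiv.arrowCongr (Equiv.addLeft c) (Equiv.refl Bool))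
          _ _ fun ε => rfl

lemma ff_sum_le {N M : ℕ} (v : Fin M → Fin N → ℝ) :
    ff (fun j => ∑ c, v c j) ≤ ∑ c, ff (v c) := by
  unfold ff
  rw [Finset.sum_comm]
  apply Finset.sum_le_sum
  intro ε _
  have h1 : ∑ j, (∑ c, v c j) * bsign (ε j) = ∑ c, ∑ j, v c j * bsign (ε j) := by
    rw [Finset.sum_comm]
    exact Finset.sum_congr rfl fun j _ => Finset.sum_mul _ _ _
  rw [h1]
  exact Finset.abs_sum_le_sum_abs _ _

lemma ff_const {N : ℕ} (L : ℝ) (hL : 0 ≤ L) : ff (fun _ : Fin N => L) = L * (TT N : ℝ) := by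
  unfold ff TT
  push_cast
  rw [Finset.mul_sum]
  refine Finset.sum_congr rfl fun ε _ => ?_
  have h1 : ∑ j, L * bsign (ε j) = L * ∑ j, bsign (ε j) := by rw [Finset.mul_sum]
  rw [h1, abs_mul, abs_of_nonneg hL]
  congr 1
  unfold szum bsign
  push_cast
  rfl

lemma khintchine {N : ℕ} (hN : 0 < N) (a : Fin N → ℝ) :
    (2:ℝ)^N * ((∑ j, |a j|) / Real.sqrt (2 * N)) ≤ ff a := by
  haveI : NeZero N := ⟨hN.ne'⟩
  set L := ∑ j, |a j| with hLdef
  have hL : 0 ≤ L := Finset.sum_nonneg fun _ _ => abs_nonneg _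
  have hNpos : (0:ℝ) < N := by exact_mod_cast hN
  have h1 : L * (TT N : ℝ) ≤ N * ff a := by
    have hshift : ∀ c : Fin N, ff (fun j => |a (c + j)|) = ff a := by
      intro c
      rw [show (fun j => |a (c + j)|) = (fun j : Fin N => (fun i => |a i|) (c + j)) from rfl,
        ff_shift (fun i => |a i|) c]
      exact ff_abs a
    have hconst : (fun _ : Fin N => L) = fun j => ∑ c : Fin N, |a (c + j)| := by
      funext j
      rw [hLdef]
      exact (Equiv.sum_comp (Equiv.addRight j) (fun i => |a i|)).symm
    calc L * (TT N : ℝ) = ff (fun _ : Fin N => L) := (ff_const L hL).symm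
      _ = ff (fun j => ∑ c : Fin N, |a (c + j)|) := by rw [hconst]
      _ ≤ ∑ c : Fin N, ff (fun j => |a (c + j)|) := ff_sum_le _
      _ = ∑ c : Fin N, ff a := Finset.sum_congr rfl fun c _ => hshift c
      _ = N * ff a := by
          rw [Finset.sum_const, Finset.card_univ, Fintype.card_fin, nsmul_eq_mul]
  have h2 : (2:ℝ)^N * Real.sqrt ((N:ℝ) / 2) ≤ (TT N : ℝ) := by
    refine le_trans ?_ (TT_bound N)
    apply mul_le_mul_of_nonneg_left _ (by positivity)
    apply Real.sqrt_le_sqrt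
    have h : N ≤ 2 * ((N+1)/2) := by omega
    have h' : (N:ℝ) ≤ 2 * (((N+1)/2 : ℕ) : ℝ) := by exact_mod_cast h
    linarith
  have hid : Real.sqrt (2*(N:ℝ)) * Real.sqrt ((N:ℝ)/2) = (N:ℝ) := by
    rw [← Real.sqrt_mul (by positivity)]
    rw [show (2*(N:ℝ)) * ((N:ℝ)/2) = (N:ℝ)^2 by ring, Real.sqrt_sq (by positivity)]
  have hsqpos : (0:ℝ) < Real.sqrt (2*(N:ℝ)) := Real.sqrt_pos.2 (by positivity)
  have h4 : 2^N * L * Real.sqrt ((N:ℝ)/2) ≤ L * (TT N : ℝ) := by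
    calc 2^N * L * Real.sqrt ((N:ℝ)/2) = L * (2^N * Real.sqrt ((N:ℝ)/2)) := by ring
      _ ≤ L * (TT N : ℝ) := mul_le_mul_of_nonneg_left h2 hL
  have heq : 2^N * (L / Real.sqrt (2 * (N:ℝ))) = (2^N * L) / Real.sqrt (2 * (N:ℝ)) := by
    ring
  rw [heq, div_le_iff₀ hsqpos]
  have h6 : 2^N * L * Real.sqrt ((N:ℝ)/2) ≤ (N:ℝ) * ff a := le_trans h4 h1
  have h7 := mul_le_mul_of_nonneg_right h6 hsqpos.le
  have h8 : 2^N * L * Real.sqrt ((N:ℝ)/2) * Real.sqrt (2*(N:ℝ)) = 2^N * L * (N:ℝ) := by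
    linear_combination (2:ℝ)^N * L * hid
  nlinarith [h7, h8, hNpos]

lemma toReal_pos_of_one_le {p : ℝ≥0∞} (hp : 1 ≤ p) (hp' : p ≠ ∞) : 0 < p.toReal :=
  ENNReal.toReal_pos (by intro h; rw [h] at hp; simp at hp) hp'

lemma pnorm_coord {n : ℕ} (p : ℝ≥0∞) (hp : 1 ≤ p) (i₀ : Fin n) :
    pnorm p (fun i => if i = i₀ then (1:ℝ) else 0) = 1 := by
  haveI : Nonempty (Fin n) := ⟨i₀⟩
  unfold pnorm
  split_ifs with h
  · apply le_antisymm
    · apply ciSup_le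
      intro i
      simp only []
      split_ifs <;> norm_num
    · have h2 := le_ciSup (f := fun i : Fin n => |if i = i₀ then (1:ℝ) else 0|)
        (Set.Finite.bddAbove (Set.finite_range _)) i₀
      simpa using h2
  · have hpt : 0 < p.toReal := toReal_pos_of_one_le hp h
    have h1 : (∑ i, |if i = i₀ then (1:ℝ) else 0| ^ p.toReal) = 1 := by
      rw [Finset.sum_congr rfl (fun i _ => show |if i = i₀ then (1:ℝ) else 0| ^ p.toReal
          = if i = i₀ then 1 else 0 by
        split_ifs <;> simp [Real.rpow_natCast, hpt.ne', Real.zero_rpow])]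
      rw [Finset.sum_ite_eq' Finset.univ i₀ (fun _ => (1:ℝ))]
      simp
    rw [h1, Real.one_rpow]

lemma pnorm_sign {n : ℕ} (hn : 0 < n) (p : ℝ≥0∞) (hp : 1 ≤ p) (w : Fin n → ℝ)
    (hw : ∀ j, |w j| = 1) :
    pnorm p (fun j => (n:ℝ) ^ (-(p.toReal)⁻¹) * w j) = 1 := by
  haveI : Nonempty (Fin n) := ⟨⟨0, hn⟩⟩
  have hnr : (0:ℝ) < n := by exact_mod_cast hn
  unfold pnorm
  split_ifs with h
  · rw [h]
    simp only [ENNReal.toReal_top, inv_zero, neg_zero, Real.rpow_zero, one_mul]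
    calc ⨆ i, |w i| = ⨆ _ : Fin n, (1:ℝ) := iSup_congr hw
      _ = 1 := ciSup_const
  · have hpt : 0 < p.toReal := toReal_pos_of_one_le hp h
    have hs : (0:ℝ) < (n:ℝ) ^ (-(p.toReal)⁻¹) := Real.rpow_pos_of_pos hnr _
    have h1 : ∀ j, |(n:ℝ) ^ (-(p.toReal)⁻¹) * w j| ^ p.toReal
        = (n:ℝ) ^ (-(p.toReal)⁻¹ * p.toReal) := by
      intro j
      rw [abs_mul, hw, mul_one, abs_of_pos hs, ← Real.rpow_mul hnr.le]
    have h2 : (-(p.toReal)⁻¹ * p.toReal) = -1 := by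
      field_simp
    rw [Finset.sum_congr rfl fun j _ => h1 j, Finset.sum_const, Finset.card_univ,
      Fintype.card_fin, nsmul_eq_mul, h2, Real.rpow_neg_one]
    rw [mul_inv_cancel₀ hnr.ne', Real.one_rpow]

lemma pnorm_le_one {n : ℕ} (p : ℝ≥0∞) (hp : 1 ≤ p) (x : Fin n → ℝ)
    (hx : pnorm p x = 1) (i : Fin n) : |x i| ≤ 1 := by
  unfold pnorm at hx
  split_ifs at hx with h
  · rw [← hx]
    exact le_ciSup (f := fun i => |x i|) (Set.Finite.bddAbove (Set.finite_range _)) i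
  · have hpt : 0 < p.toReal := toReal_pos_of_one_le hp h
    have hT0 : 0 ≤ ∑ i, |x i| ^ p.toReal :=
      Finset.sum_nonneg fun i _ => Real.rpow_nonneg (abs_nonneg _) _
    have hT : (∑ i, |x i| ^ p.toReal) = 1 := by
      have := congrArg (fun t : ℝ => t ^ p.toReal) hx
      simpa [← Real.rpow_mul hT0, one_div, inv_mul_cancel₀ hpt.ne'] using this
    have hle : |x i| ^ p.toReal ≤ 1 := by
      rw [← hT]
      exact Finset.single_le_sum (fun i _ => Real.rpow_nonneg (abs_nonneg _) _)
        (Finset.mem_univ i)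
    by_contra hgt
    push_neg at hgt
    have : 1 < |x i| ^ p.toReal :=
      (Real.one_lt_rpow_iff_of_pos (lt_trans one_pos hgt)).2 (Or.inl ⟨hgt, hpt⟩)
    linarith

set_option maxHeartbeats 1000000 in
theorem stmt1 (n : ℕ) (p q r : ℝ≥0∞) (hp : 1 ≤ p) (hp2 : p ≤ 2) (h2q : 2 ≤ q) (hqr : q ≤ r)
    (A : Fin n → Fin n → Fin n → ℝ) :
    sSup {t : ℝ | ∃ x y z : Fin n → ℝ, pnorm p x = 1 ∧ pnorm q y = 1 ∧ pnorm r z = 1 ∧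
        t = |∑ i, ∑ j, ∑ k, A i j k * x i * y j * z k|} ≥
      (1 / Real.sqrt 2) * (n : ℝ) ^ (-(1 / q).toReal - (1 / r).toReal - 3 / 2) *
        ∑ i, ∑ j, ∑ k, |A i j k| := by
  have hq1 : (1:ℝ≥0∞) ≤ q := le_trans (by norm_num) h2q
  have hr1 : (1:ℝ≥0∞) ≤ r := le_trans hq1 hqr
  rcases Nat.eq_zero_or_pos n with rfl | hn
  · -- n = 0 : the constraint set is empty and both sides are 0
    have hempty : {t : ℝ | ∃ x y z : Fin 0 → ℝ, pnorm p x = 1 ∧ pnorm q y = 1 ∧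
        pnorm r z = 1 ∧ t = |∑ i, ∑ j, ∑ k, A i j k * x i * y j * z k|} = ∅ := by
      ext t
      simp only [Set.mem_setOf_eq, Set.mem_empty_iff_false, iff_false]
      rintro ⟨x, y, z, hx, -, -, -⟩
      unfold pnorm at hx
      split_ifs at hx with h
      · rw [Real.iSup_of_isEmpty] at hx
        norm_num at hx
      · have hpt : 0 < p.toReal := toReal_pos_of_one_le hp h
        rw [Finset.univ_eq_empty, Finset.sum_empty,
          Real.zero_rpow (by positivity)] at hx
        norm_num at hx
    rw [hempty, Real.sSup_empty]
    simp
  · haveI : NeZero n := ⟨hn.ne'⟩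
    have hnr : (0:ℝ) < n := by exact_mod_cast hn
    set L : ℝ := ∑ i, ∑ j, ∑ k, |A i j k| with hLdef
    have hL0 : 0 ≤ L := hLdef ▸ Finset.sum_nonneg fun i _ => Finset.sum_nonneg fun j _ =>
      Finset.sum_nonneg fun k _ => abs_nonneg _
    -- pick the best slice i₀
    obtain ⟨i₀, -, hi₀⟩ := Finset.exists_max_image Finset.univ
      (fun i => ∑ j, ∑ k, |A i j k|) ⟨⟨0, hn⟩, Finset.mem_univ _⟩
    have hi₀' : L ≤ n * ∑ j, ∑ k, |A i₀ j k| := by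
      rw [hLdef]
      calc ∑ i, ∑ j, ∑ k, |A i j k| ≤ ∑ _i : Fin n, (∑ j, ∑ k, |A i₀ j k|) :=
            Finset.sum_le_sum fun i _ => hi₀ i (Finset.mem_univ i)
        _ = n * ∑ j, ∑ k, |A i₀ j k| := by
            rw [Finset.sum_const, Finset.card_univ, Fintype.card_fin, nsmul_eq_mul]
    -- Khintchine: find a good sign vector ε₀
    set c : ℝ := (∑ k, ∑ j, |A i₀ j k|) / Real.sqrt (2 * n) with hcdef
    have hsum : ∑ _ε : Fin n → Bool, c
        ≤ ∑ ε : Fin n → Bool, ∑ k, |∑ j, A i₀ j k * bsign (ε j)| := by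
      rw [Finset.sum_const, Finset.card_univ, Fintype.card_fun, Fintype.card_bool,
        Fintype.card_fin, nsmul_eq_mul, Finset.sum_comm, Nat.cast_pow, Nat.cast_ofNat]
      have hkh : ∀ k, (2:ℝ)^n * ((∑ j, |A i₀ j k|) / Real.sqrt (2*n))
          ≤ ∑ ε : Fin n → Bool, |∑ j, A i₀ j k * bsign (ε j)| :=
        fun k => khintchine hn (fun j => A i₀ j k)
      calc (2:ℝ)^n * c = ∑ k : Fin n, (2:ℝ)^n * ((∑ j, |A i₀ j k|) / Real.sqrt (2*n)) := by
            rw [hcdef, ← Finset.mul_sum, ← Finset.sum_div]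
        _ ≤ _ := Finset.sum_le_sum fun k _ => hkh k
    obtain ⟨ε₀, -, hε₀⟩ := Finset.exists_le_of_sum_le
      (Finset.univ_nonempty (α := Fin n → Bool)) hsum
    set δ : Fin n → ℝ := fun j => bsign (ε₀ j) with hδdef
    set Sk : Fin n → ℝ := fun k => ∑ j, A i₀ j k * δ j with hSkdef
    set η : Fin n → ℝ := fun k => if 0 ≤ Sk k then 1 else -1 with hηdef
    have hηval : ∀ k, η k = if 0 ≤ Sk k then 1 else -1 := fun k => by rw [hηdef]
    have hηS : ∀ k, η k * Sk k = |Sk k| := by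
      intro k
      rw [hηval k]
      split_ifs with h
      · rw [one_mul, abs_of_nonneg h]
      · rw [neg_one_mul, abs_of_neg (lt_of_not_ge h)]
    set sq : ℝ := (n:ℝ) ^ (-(q.toReal)⁻¹) with hsqdef
    set sr : ℝ := (n:ℝ) ^ (-(r.toReal)⁻¹) with hsrdef
    have hsqpos : 0 < sq := Real.rpow_pos_of_pos hnr _
    have hsrpos : 0 < sr := Real.rpow_pos_of_pos hnr _
    set x : Fin n → ℝ := fun i => if i = i₀ then (1:ℝ) else 0 with hxdef
    set y : Fin n → ℝ := fun j => sq * δ j with hydef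
    set z : Fin n → ℝ := fun k => sr * η k with hzdef
    have hx : pnorm p x = 1 := pnorm_coord p hp i₀
    have hy : pnorm q y = 1 := pnorm_sign hn q hq1 δ (fun j => abs_bsign _)
    have hz : pnorm r z = 1 := by
      refine pnorm_sign hn r hr1 η (fun k => ?_)
      rw [hηval k]; split_ifs <;> norm_num
    -- value of the trilinear form at (x, y, z)
    have hval : ∑ i, ∑ j, ∑ k, A i j k * x i * y j * z k = sq * sr * ∑ k, |Sk k| := by
      have h1 : ∀ i, ∑ j, ∑ k, A i j k * x i * y j * z k
          = x i * ∑ j, ∑ k, A i j k * y j * z k := by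
        intro i
        rw [Finset.mul_sum]
        refine Finset.sum_congr rfl fun j _ => ?_
        rw [Finset.mul_sum]
        exact Finset.sum_congr rfl fun k _ => by ring
      rw [Finset.sum_congr rfl fun i _ => h1 i]
      rw [Finset.sum_eq_single_of_mem i₀ (Finset.mem_univ _) ?_]
      · have hx1 : x i₀ = 1 := by rw [hxdef]; simp
        rw [hx1, one_mul]
        calc ∑ j, ∑ k, A i₀ j k * y j * z k
            = ∑ j, ∑ k, sq * sr * (A i₀ j k * δ j * η k) := by
              refine Finset.sum_congr rfl fun j _ => Finset.sum_congr rfl fun k _ => ?_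
              rw [hydef, hzdef]; ring
          _ = sq * sr * ∑ j, ∑ k, A i₀ j k * δ j * η k := by
              rw [Finset.mul_sum]
              exact Finset.sum_congr rfl fun j _ => by rw [Finset.mul_sum]
          _ = sq * sr * ∑ k, ∑ j, A i₀ j k * δ j * η k := by rw [Finset.sum_comm]
          _ = sq * sr * ∑ k, η k * Sk k := by
              congr 1
              refine Finset.sum_congr rfl fun k _ => ?_
              rw [hSkdef]
              simp only [Finset.mul_sum]
              exact Finset.sum_congr rfl fun j _ => by ring
          _ = sq * sr * ∑ k, |Sk k| := by
              congr 1
              exact Finset.sum_congr rfl fun k _ => hηS k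
      · intro i _ hi
        have : x i = 0 := by rw [hxdef]; simp [hi]
        rw [this, zero_mul]
    -- the set is bounded above by L
    have hbdd : BddAbove {t : ℝ | ∃ x y z : Fin n → ℝ, pnorm p x = 1 ∧ pnorm q y = 1 ∧
        pnorm r z = 1 ∧ t = |∑ i, ∑ j, ∑ k, A i j k * x i * y j * z k|} := by
      refine ⟨L, ?_⟩
      rintro t ⟨x', y', z', hx', hy', hz', rfl⟩
      have hb : ∀ i j k, |A i j k * x' i * y' j * z' k| ≤ |A i j k| := by
        intro i j k
        rw [abs_mul, abs_mul, abs_mul]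
        have h1 := pnorm_le_one p hp x' hx' i
        have h2 := pnorm_le_one q hq1 y' hy' j
        have h3 := pnorm_le_one r hr1 z' hz' k
        have ha := abs_nonneg (A i j k)
        have hy0 := abs_nonneg (y' j)
        have hz0 := abs_nonneg (z' k)
        calc |A i j k| * |x' i| * |y' j| * |z' k| ≤ |A i j k| * 1 * 1 * 1 := by
              exact mul_le_mul (mul_le_mul (mul_le_mul_of_nonneg_left h1 ha) h2 hy0
                (by positivity)) h3 hz0 (by positivity)
          _ = |A i j k| := by ring
      calc |∑ i, ∑ j, ∑ k, A i j k * x' i * y' j * z' k|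
          ≤ ∑ i, |∑ j, ∑ k, A i j k * x' i * y' j * z' k| := Finset.abs_sum_le_sum_abs _ _
        _ ≤ ∑ i, ∑ j, |∑ k, A i j k * x' i * y' j * z' k| :=
            Finset.sum_le_sum fun i _ => Finset.abs_sum_le_sum_abs _ _
        _ ≤ ∑ i, ∑ j, ∑ k, |A i j k * x' i * y' j * z' k| :=
            Finset.sum_le_sum fun i _ => Finset.sum_le_sum fun j _ =>
              Finset.abs_sum_le_sum_abs _ _
        _ ≤ L := by
            rw [hLdef]
            exact Finset.sum_le_sum fun i _ => Finset.sum_le_sum fun j _ =>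
              Finset.sum_le_sum fun k _ => hb i j k
    -- membership
    have hmem : |∑ i, ∑ j, ∑ k, A i j k * x i * y j * z k| ∈
        {t : ℝ | ∃ x y z : Fin n → ℝ, pnorm p x = 1 ∧ pnorm q y = 1 ∧
          pnorm r z = 1 ∧ t = |∑ i, ∑ j, ∑ k, A i j k * x i * y j * z k|} :=
      ⟨x, y, z, hx, hy, hz, rfl⟩
    refine le_trans ?_ (le_csSup hbdd hmem)
    -- final arithmetic
    have hSknn : 0 ≤ ∑ k, |Sk k| := Finset.sum_nonneg fun k _ => abs_nonneg _
    rw [hval, abs_of_nonneg (by positivity)]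
    -- key inequality : L / (n * sqrt (2n)) ≤ ∑ |Sk|
    have hs2n : (0:ℝ) < Real.sqrt (2 * n) := Real.sqrt_pos.2 (by positivity)
    have hT : L / (n:ℝ) ≤ ∑ k, ∑ j, |A i₀ j k| := by
      rw [div_le_iff₀ hnr]
      calc L ≤ n * ∑ j, ∑ k, |A i₀ j k| := hi₀'
        _ = (∑ k, ∑ j, |A i₀ j k|) * n := by rw [Finset.sum_comm]; ring
    have hkey : L / ((n:ℝ) * Real.sqrt (2 * n)) ≤ ∑ k, |Sk k| := by
      refine le_trans ?_ hε₀
      rw [hcdef]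
      calc L / ((n:ℝ) * Real.sqrt (2 * n)) = (L / (n:ℝ)) / Real.sqrt (2 * n) := by
            rw [div_div]
        _ ≤ (∑ k, ∑ j, |A i₀ j k|) / Real.sqrt (2 * n) := by gcongr
    -- coefficient identity
    have hq' : (1/q).toReal = (q.toReal)⁻¹ := by rw [one_div, ENNReal.toReal_inv]
    have hr' : (1/r).toReal = (r.toReal)⁻¹ := by rw [one_div, ENNReal.toReal_inv]
    have hns : Real.sqrt ((n:ℝ)) * Real.sqrt (n:ℝ) = (n:ℝ) := Real.mul_self_sqrt hnr.le
    have hcoef : (1 / Real.sqrt 2) * (n : ℝ) ^ (-(1 / q).toReal - (1 / r).toReal - 3 / 2)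
        = sq * sr * (1 / ((n:ℝ) * Real.sqrt (2 * n))) := by
      rw [hq', hr']
      rw [show -(q.toReal)⁻¹ - (r.toReal)⁻¹ - 3/2
          = (-(q.toReal)⁻¹) + (-(r.toReal)⁻¹) + (-(3/2) : ℝ) by ring]
      rw [Real.rpow_add hnr, Real.rpow_add hnr, ← hsqdef, ← hsrdef]
      have h32 : (n:ℝ) ^ (-(3/2) : ℝ) = 1 / ((n:ℝ) * Real.sqrt (n:ℝ)) := by
        rw [show (-(3/2) : ℝ) = -(1 + 1/2) by norm_num, Real.rpow_neg hnr.le,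
          Real.rpow_add hnr, Real.rpow_one, ← Real.sqrt_eq_rpow]
        rw [one_div]
      rw [h32, Real.sqrt_mul (by norm_num : (0:ℝ) ≤ 2)]
      field_simp
    rw [hcoef]
    calc sq * sr * (1 / ((n:ℝ) * Real.sqrt (2 * n))) * L
        = sq * sr * (L / ((n:ℝ) * Real.sqrt (2 * n))) := by ring
      _ ≤ sq * sr * ∑ k, |Sk k| := by gcongr
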